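/- Let τ be a Galton-Watson tree with offspring distribution μ on the nonnegative integers. Then the Lukasiewicz path D(τ) is a random walk started at 0, stopped at the first hitting time of -1, whose jump distribution is ρ(k) = μ(k+1) for k ≥ -1. -/

import Mathlib

open scoped Classical

/-- A finite rooted ordered tree, encoded as a finite set of finite words of positive
integers: the root is the empty word, the set is closed under taking prefixes, and the
children of a vertex `u` present in the tree are exactly `u++[1], …, u++[k_u]`. -/
structure OTree where
  verts : Finset (List ℕ)
  root_mem : ([] : List ℕ) ∈ verts
  snoc_mem : ∀ (u : List ℕ) (j : ℕ), u ++ [j] ∈ verts → u ∈ verts ∧ 1 ≤ j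
  initial_seg : ∀ (u : List ℕ) (j k : ℕ), u ++ [k] ∈ verts → 1 ≤ j → j ≤ k →
      u ++ [j] ∈ verts

namespace OTree

/-- the number `k_u(t)` of children of the word `u` in the tree `t` -/
noncomputable def kids (t : OTree) (u : List ℕ) : ℕ :=
  (t.verts.filter fun v => u <+: v ∧ v.length = u.length + 1).card

/-- the `n`-th vertex of `t` in the lexicographical order (`u_n`) -/
noncomputable def vtx (t : OTree) (n : ℕ) : List ℕ :=
  (t.verts.sort (· ≤ ·)).getD n []

/-- the height process of `t` : `H_n(t) = |u_n|` -/
noncomputable def H (t : OTree) (n : ℕ) : ℕ := (t.vtx n).length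

/-- the Lukasiewicz path of `t` : `D_0(t)=0`, `D_{n+1}(t)=D_n(t)+k_{u_n}(t)-1` -/
noncomputable def D (t : OTree) (n : ℕ) : ℤ :=
  ∑ j ∈ Finset.range n, ((t.kids (t.vtx j) : ℤ) - 1)

end OTree

open MeasureTheory
open scoped ENNReal

/-- the jump distribution `ρ(k) = μ(k+1)`, `k ≥ -1`, as a function on `ℤ` -/
noncomputable def stepLaw (μ : PMF ℕ) (z : ℤ) : ℝ≥0∞ :=
  if -1 ≤ z then μ (z + 1).toNat else 0
open List in
theorem lex_lt_append_cons {l r : List ℕ} {a : ℕ} : l < l ++ a :: r := by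
  show List.Lex _ _ _
  induction l with
  | nil => exact List.Lex.nil
  | cons b t ih => exact List.Lex.cons ih

theorem lt_of_prefix_ne {u v : List ℕ} (h : u <+: v) (hne : u ≠ v) : u < v := by
  obtain ⟨w, rfl⟩ := h
  cases w with
  | nil => simp at hne
  | cons a r => exact lex_lt_append_cons

theorem le_of_prefix {u v : List ℕ} (h : u <+: v) : u ≤ v := by
  rcases eq_or_ne u v with rfl | hne
  · exact le_rfl
  · exact le_of_lt (lt_of_prefix_ne h hne)

theorem lt_decomp {u v : List ℕ} (h : u < v) :
    u <+: v ∨ ∃ p a s b r, u = p ++ a :: s ∧ v = p ++ b :: r ∧ a < b := by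
  have h' : List.Lex (· < ·) u v := h
  induction h' with
  | nil => left; exact List.nil_prefix
  | @rel a l₁ b l₂ hab => right; exact ⟨[], a, l₁, b, l₂, rfl, rfl, hab⟩
  | @cons a l₁ l₂ hlex ih =>
      rcases ih hlex with hp | ⟨p, c, s, d, r, rfl, rfl, hcd⟩
      · left; exact (List.prefix_cons_inj a).mpr hp
      · right; exact ⟨a :: p, c, s, d, r, rfl, rfl, hcd⟩

theorem lex_append_left_lt {p : List ℕ} {l₁ l₂ : List ℕ} (h : l₁ < l₂) : p ++ l₁ < p ++ l₂ :=
  List.Lex.append_left _ h p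

theorem lex_append_left_le {p : List ℕ} {l₁ l₂ : List ℕ} (h : l₁ ≤ l₂) : p ++ l₁ ≤ p ++ l₂ := by
  rcases lt_or_eq_of_le h with h | rfl
  · exact le_of_lt (lex_append_left_lt h)
  · exact le_rfl

namespace OTree

variable (t : OTree)

theorem prefix_mem {u v : List ℕ} (hv : v ∈ t.verts) (h : u <+: v) : u ∈ t.verts := by
  obtain ⟨w, rfl⟩ := h
  induction w using List.reverseRecOn with
  | nil => simpa using hv
  | append_singleton w a ih =>
      rw [← List.append_assoc] at hv
      exact ih (t.snoc_mem _ _ hv).1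

/-- the children of `u` in `t` -/
noncomputable def childSet (u : List ℕ) : Finset (List ℕ) :=
  t.verts.filter fun v => u <+: v ∧ v.length = u.length + 1

theorem mem_childSet_iff {u v : List ℕ} :
    v ∈ t.childSet u ↔ v ∈ t.verts ∧ ∃ a, v = u ++ [a] := by
  simp only [childSet, Finset.mem_filter]
  constructor
  · rintro ⟨hv, ⟨w, rfl⟩, hl⟩
    refine ⟨hv, ?_⟩
    have : w.length = 1 := by simpa using hl
    obtain ⟨a, rfl⟩ := List.length_eq_one_iff.mp this
    exact ⟨a, rfl⟩
  · rintro ⟨hv, a, rfl⟩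
    exact ⟨hv, ⟨[a], rfl⟩, by simp⟩

theorem kids_eq_card_childSet (u : List ℕ) : t.kids u = (t.childSet u).card := rfl

theorem snoc_mem_iff {u : List ℕ} {j : ℕ} :
    u ++ [j] ∈ t.verts ↔ 1 ≤ j ∧ j ≤ t.kids u := by
  constructor
  · intro h
    have h1 : 1 ≤ j := (t.snoc_mem _ _ h).2
    refine ⟨h1, ?_⟩
    -- the set {u++[i] : 1 ≤ i ≤ j} is included in childSet
    have hsub : (Finset.Icc 1 j).image (fun i => u ++ [i]) ⊆ t.childSet u := by
      intro v hv
      simp only [Finset.mem_image, Finset.mem_Icc] at hv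
      obtain ⟨i, ⟨hi1, hij⟩, rfl⟩ := hv
      exact (t.mem_childSet_iff).mpr ⟨t.initial_seg u i j h hi1 hij, i, rfl⟩
    have hcard : ((Finset.Icc 1 j).image (fun i => u ++ [i])).card = j := by
      rw [Finset.card_image_of_injective _ (fun a b hab => by simpa using hab)]
      simp
    calc j = ((Finset.Icc 1 j).image (fun i => u ++ [i])).card := hcard.symm
      _ ≤ (t.childSet u).card := Finset.card_le_card hsub
      _ = t.kids u := rfl
  · rintro ⟨h1, hk⟩
    by_contra hmem
    -- then every child has index < j
    have hsub : t.childSet u ⊆ (Finset.Icc 1 (j - 1)).image (fun i => u ++ [i]) := by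
      intro v hv
      rw [t.mem_childSet_iff] at hv
      obtain ⟨hv, a, rfl⟩ := hv
      have ha1 : 1 ≤ a := (t.snoc_mem _ _ hv).2
      have haj : a < j := by
        by_contra hle
        exact hmem (t.initial_seg u j a hv h1 (le_of_not_gt hle))
      simp only [Finset.mem_image, Finset.mem_Icc]
      exact ⟨a, ⟨ha1, by omega⟩, rfl⟩
    have := Finset.card_le_card hsub
    rw [kids_eq_card_childSet] at hk
    have hcard : ((Finset.Icc 1 (j-1)).image (fun i => u ++ [i])).card ≤ j - 1 := by
      refine le_trans Finset.card_image_le ?_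
      simp
    omega

end OTree
namespace OTree

variable (t : OTree)

theorem card_pos : 0 < t.verts.card := Finset.card_pos.mpr ⟨[], t.root_mem⟩

theorem length_sortL : (t.verts.sort (· ≤ ·)).length = t.verts.card := Finset.length_sort _

theorem vtx_eq_get {n : ℕ} (h : n < t.verts.card) :
    t.vtx n = (t.verts.sort (· ≤ ·)).get ⟨n, by rwa [t.length_sortL]⟩ := by
  rw [vtx, List.getD_eq_getElem _ _ (by rwa [t.length_sortL])]
  rfl

theorem vtx_mem {n : ℕ} (h : n < t.verts.card) : t.vtx n ∈ t.verts := by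
  rw [t.vtx_eq_get h]
  exact (Finset.mem_sort (α := List ℕ) (· ≤ ·)).mp (List.get_mem _ _)

theorem vtx_strictMonoOn {i j : ℕ} (hij : i < j) (hj : j < t.verts.card) :
    t.vtx i < t.vtx j := by
  rw [t.vtx_eq_get (lt_trans hij hj), t.vtx_eq_get hj]
  exact (Finset.sortedLT_sort t.verts).strictMono_get (by simpa using hij)

theorem exists_vtx {u : List ℕ} (hu : u ∈ t.verts) : ∃ n < t.verts.card, t.vtx n = u := by
  have : u ∈ t.verts.sort (· ≤ ·) := (Finset.mem_sort _).mpr hu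
  obtain ⟨⟨n, hn⟩, hget⟩ := List.mem_iff_get.mp this
  refine ⟨n, by rwa [t.length_sortL] at hn, ?_⟩
  rw [t.vtx_eq_get (by rwa [t.length_sortL] at hn)]
  exact hget

theorem vtx_lt_iff {i j : ℕ} (hi : i < t.verts.card) (hj : j < t.verts.card) :
    t.vtx i < t.vtx j ↔ i < j := by
  constructor
  · intro h
    by_contra hle
    rcases lt_or_eq_of_le (le_of_not_gt hle) with h' | rfl
    · exact absurd (t.vtx_strictMonoOn h' hi) (not_lt_of_gt h)
    · exact lt_irrefl _ h
  · intro h; exact t.vtx_strictMonoOn h hj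

theorem vtx_injOn {i j : ℕ} (hi : i < t.verts.card) (hj : j < t.verts.card)
    (h : t.vtx i = t.vtx j) : i = j := by
  by_contra hne
  rcases Nat.lt_or_ge i j with h' | h'
  · exact absurd h (ne_of_lt (t.vtx_strictMonoOn h' hj))
  · rcases lt_or_eq_of_le h' with h'' | rfl
    · exact absurd h.symm (ne_of_lt (t.vtx_strictMonoOn h'' hi))
    · exact hne rfl

theorem vtx_zero : t.vtx 0 = [] := by
  obtain ⟨n, hn, hvn⟩ := t.exists_vtx t.root_mem
  rcases Nat.eq_zero_or_pos n with rfl | hpos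
  · exact hvn
  · exfalso
    have := t.vtx_strictMonoOn hpos hn
    rw [hvn] at this
    exact absurd (le_of_prefix List.nil_prefix) (not_le_of_gt this)

theorem vtx_ne_nil {n : ℕ} (hn : 0 < n) (h : n < t.verts.card) : t.vtx n ≠ [] := by
  have := t.vtx_strictMonoOn hn h
  rw [t.vtx_zero] at this
  intro hc; rw [hc] at this; exact lt_irrefl _ this

theorem dropLast_mem {v : List ℕ} (hv : v ∈ t.verts) : v.dropLast ∈ t.verts :=
  t.prefix_mem hv (List.dropLast_prefix v)

theorem dropLast_lt {v : List ℕ} (hv : v ≠ []) : v.dropLast < v := by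
  refine lt_of_prefix_ne (List.dropLast_prefix v) ?_
  intro hc
  have := congrArg List.length hc
  rw [List.length_dropLast] at this
  have : v.length ≠ 0 := fun h => hv (List.length_eq_zero_iff.mp h)
  omega

theorem mem_childSet_dropLast {v : List ℕ} (hv : v ∈ t.verts) (hne : v ≠ []) :
    v ∈ t.childSet v.dropLast :=
  (t.mem_childSet_iff).mpr ⟨hv, v.getLast hne, (List.dropLast_append_getLast hne).symm⟩

theorem childSet_disjoint {u u' : List ℕ} (h : u ≠ u') :
    Disjoint (t.childSet u) (t.childSet u') := by
  rw [Finset.disjoint_left]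
  intro v hv hv'
  obtain ⟨-, a, rfl⟩ := (t.mem_childSet_iff).mp hv
  obtain ⟨-, b, hb⟩ := (t.mem_childSet_iff).mp hv'
  exact h (List.append_inj_left' hb (by simp))

theorem sum_kids_eq (j : ℕ) (hj : j ≤ t.verts.card) :
    ∑ i ∈ Finset.range j, t.kids (t.vtx i)
      = ((Finset.range j).biUnion fun i => t.childSet (t.vtx i)).card := by
  have hdisj : ∀ i ∈ Finset.range j, ∀ i' ∈ Finset.range j, i ≠ i' →
      Disjoint (t.childSet (t.vtx i)) (t.childSet (t.vtx i')) := by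
    intro i hi i' hi' hne
    simp only [Finset.mem_range] at hi hi'
    exact t.childSet_disjoint fun h => hne (t.vtx_injOn (lt_of_lt_of_le hi hj) (lt_of_lt_of_le hi' hj) h)
  rw [Finset.card_biUnion hdisj]
  rfl

theorem D_eq (j : ℕ) : t.D j = (∑ i ∈ Finset.range j, (t.kids (t.vtx i) : ℤ)) - j := by
  rw [D, Finset.sum_sub_distrib]
  simp

theorem D_nonneg {j : ℕ} (hj : j < t.verts.card) : 0 ≤ t.D j := by
  rw [t.D_eq]
  have key : (j : ℤ) ≤ ∑ i ∈ Finset.range j, (t.kids (t.vtx i) : ℤ) := by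
    have hnat : j ≤ ∑ i ∈ Finset.range j, t.kids (t.vtx i) := by
      rw [t.sum_kids_eq j (le_of_lt hj)]
      have hsub : (Finset.range j).image (fun i => t.vtx (i + 1)) ⊆
          (Finset.range j).biUnion fun i => t.childSet (t.vtx i) := by
        intro v hv
        simp only [Finset.mem_image, Finset.mem_range] at hv
        obtain ⟨i, hi, rfl⟩ := hv
        have hi1 : i + 1 < t.verts.card := by omega
        have hne : t.vtx (i + 1) ≠ [] := t.vtx_ne_nil (Nat.succ_pos i) hi1
        have hmem : t.vtx (i + 1) ∈ t.verts := t.vtx_mem hi1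
        have hpmem : (t.vtx (i + 1)).dropLast ∈ t.verts := t.dropLast_mem hmem
        obtain ⟨n, hn, hvn⟩ := t.exists_vtx hpmem
        have hlt : t.vtx n < t.vtx (i + 1) := by rw [hvn]; exact dropLast_lt hne
        have hni : n < i + 1 := (t.vtx_lt_iff hn hi1).mp hlt
        refine Finset.mem_biUnion.mpr ⟨n, Finset.mem_range.mpr (by omega), ?_⟩
        rw [hvn]
        exact t.mem_childSet_dropLast hmem hne
      have hcard : ((Finset.range j).image fun i => t.vtx (i + 1)).card = j := by
        rw [Finset.card_image_of_injOn, Finset.card_range]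
        intro a ha b hb hab
        simp only [Finset.mem_coe, Finset.mem_range] at ha hb
        have := t.vtx_injOn (by omega) (by omega) hab
        omega
      calc j = ((Finset.range j).image fun i => t.vtx (i + 1)).card := hcard.symm
        _ ≤ _ := Finset.card_le_card hsub
    exact_mod_cast hnat
  omega

theorem D_card_eq : t.D t.verts.card = -1 := by
  rw [t.D_eq]
  have : ∑ i ∈ Finset.range t.verts.card, t.kids (t.vtx i) = t.verts.card - 1 := by
    rw [t.sum_kids_eq _ le_rfl]
    have : ((Finset.range t.verts.card).biUnion fun i => t.childSet (t.vtx i))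
        = t.verts.erase [] := by
      ext v
      rw [Finset.mem_biUnion, Finset.mem_erase]
      constructor
      · rintro ⟨i, hi, hv⟩
        obtain ⟨hv, a, rfl⟩ := (t.mem_childSet_iff).mp hv
        exact ⟨by simp, hv⟩
      · rintro ⟨hne, hv⟩
        obtain ⟨n, hn, hvn⟩ := t.exists_vtx (t.dropLast_mem hv)
        exact ⟨n, Finset.mem_range.mpr hn, by rw [hvn]; exact t.mem_childSet_dropLast hv hne⟩
    rw [this, Finset.card_erase_of_mem t.root_mem]
  rw [← Nat.cast_sum, this]
  have := t.card_pos
  omega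

end OTree
theorem getD_append_cons (p s : List ℕ) (a : ℕ) : (p ++ a :: s).getD p.length 0 = a := by
  rw [List.getD_eq_getElem _ _ (by simp)]
  rw [List.getElem_append_right (le_refl _)]
  simp

theorem take_append_cons (p s : List ℕ) (a : ℕ) : (p ++ a :: s).take p.length = p := by
  simp [List.take_append_of_le_length]

theorem take_getD_drop {w : List ℕ} {L : ℕ} (h : L < w.length) :
    w.take L ++ w.getD L 0 :: w.drop (L + 1) = w := by
  rw [List.getD_eq_getElem _ _ h, ← List.drop_eq_getElem_cons h, List.take_append_drop]

theorem take_append_take {w l₂ : List ℕ} {n L : ℕ} (h : n ≤ L) (hL : L ≤ w.length) :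
    ((w.take L) ++ l₂).take n = w.take n := by
  rw [List.take_append_of_le_length (by simp; omega), List.take_take, min_eq_left h]

theorem findGreatest_congr {P Q : ℕ → Prop} [DecidablePred P] [DecidablePred Q]
    (h : ∀ k, P k ↔ Q k) (n : ℕ) : Nat.findGreatest P n = Nat.findGreatest Q n := by
  induction n with
  | zero => rfl
  | succ n ih =>
      rw [Nat.findGreatest_succ, Nat.findGreatest_succ, ih]
      by_cases hp : P (n + 1)
      · rw [if_pos hp, if_pos ((h _).mp hp)]
      · rw [if_neg hp, if_neg (fun hq => hp ((h _).mpr hq))]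

namespace OTree

variable (t : OTree)

/-- the candidate predicate for the lexicographic successor of `w` when `w` has no kids -/
def Cand (w : List ℕ) (ℓ : ℕ) : Prop :=
  ℓ < w.length ∧ w.take ℓ ++ [w.getD ℓ 0 + 1] ∈ t.verts

/-- index of the divergence point for the successor -/
noncomputable def nextIdx (w : List ℕ) : ℕ :=
  Nat.findGreatest (t.Cand w) w.length

/-- the lexicographic successor of `w` in `t` (when `w` has no kids) -/
noncomputable def nextWord (w : List ℕ) : List ℕ :=
  w.take (t.nextIdx w) ++ [w.getD (t.nextIdx w) 0 + 1]

theorem vtx_succ_eq {j : ℕ} {w : List ℕ} (hj : j + 1 < t.verts.card)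
    (hw : w ∈ t.verts) (hgt : t.vtx j < w)
    (hmin : ∀ v ∈ t.verts, t.vtx j < v → w ≤ v) : t.vtx (j + 1) = w := by
  have h1 : t.vtx (j + 1) ≤ w := by
    obtain ⟨i, hi, rfl⟩ := t.exists_vtx hw
    have : j < i := (t.vtx_lt_iff (by omega) hi).mp hgt
    rcases eq_or_lt_of_le (show j + 1 ≤ i by omega) with rfl | h
    · exact le_rfl
    · exact le_of_lt (t.vtx_strictMonoOn h hi)
  have h2 : w ≤ t.vtx (j + 1) :=
    hmin _ (t.vtx_mem hj) (t.vtx_strictMonoOn (Nat.lt_succ_self j) hj)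
  exact le_antisymm h1 h2

theorem succ_of_kids_pos {j : ℕ} (hj : j + 1 < t.verts.card)
    (hk : 0 < t.kids (t.vtx j)) : t.vtx (j + 1) = t.vtx j ++ [1] := by
  have hmem : t.vtx j ++ [1] ∈ t.verts := (t.snoc_mem_iff).mpr ⟨le_rfl, hk⟩
  refine t.vtx_succ_eq hj hmem (lt_of_prefix_ne ⟨[1], rfl⟩ (by simp)) ?_
  intro v hv hlt
  rcases lt_decomp hlt with hp | ⟨p, a, s, b, r, hu, hv', hab⟩
  · obtain ⟨x, rfl⟩ := hp
    cases x with
    | nil => rw [List.append_nil] at hlt; exact absurd hlt (lt_irrefl _)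
    | cons a rr =>
        have ha : t.vtx j ++ [a] ∈ t.verts := t.prefix_mem hv (by simp)
        have ha1 : 1 ≤ a := (t.snoc_mem _ _ ha).2
        apply lex_append_left_le
        rcases eq_or_lt_of_le ha1 with rfl | h
        · exact le_of_prefix ⟨rr, rfl⟩
        · exact le_of_lt (List.Lex.rel h)
  · rw [hu, hv', List.append_assoc]
    apply le_of_lt
    apply lex_append_left_lt
    exact List.Lex.rel hab

theorem cand_of_lt {w v : List ℕ} {p : List ℕ} {a b : ℕ} {s r : List ℕ}
    (hv : v ∈ t.verts) (hu : w = p ++ a :: s) (hv' : v = p ++ b :: r) (hab : a < b) :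
    t.Cand w p.length := by
  constructor
  · rw [hu]; simp
  · have hb : p ++ [b] ∈ t.verts := t.prefix_mem hv (by rw [hv']; exact ⟨r, by simp⟩)
    have : p ++ [a + 1] ∈ t.verts := t.initial_seg p (a + 1) b hb (by omega) (by omega)
    rw [hu, take_append_cons, getD_append_cons]
    exact this

theorem nextWord_spec {w : List ℕ} (hk : t.kids w = 0)
    {v₀ : List ℕ} (hv₀ : v₀ ∈ t.verts) (hgt : w < v₀) :
    t.nextWord w ∈ t.verts ∧ w < t.nextWord w ∧
      ∀ v ∈ t.verts, w < v → t.nextWord w ≤ v := by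
  have hnoext : ∀ v ∈ t.verts, w < v → ¬ w <+: v := by
    intro v hv hlt hp
    obtain ⟨x, rfl⟩ := hp
    cases x with
    | nil => rw [List.append_nil] at hlt; exact absurd hlt (lt_irrefl _)
    | cons a rr =>
        have ha : w ++ [a] ∈ t.verts := t.prefix_mem hv (by simp)
        have := (t.snoc_mem_iff).mp ha
        omega
  have hcand : ∃ ℓ, t.Cand w ℓ := by
    rcases lt_decomp hgt with hp | ⟨p, a, s, b, r, hu, hv', hab⟩
    · exact absurd hp (hnoext _ hv₀ hgt)
    · exact ⟨p.length, t.cand_of_lt hv₀ hu hv' hab⟩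
  obtain ⟨ℓ₀, hℓ₀⟩ := hcand
  have hL : t.Cand w (t.nextIdx w) :=
    Nat.findGreatest_spec (le_of_lt hℓ₀.1) hℓ₀
  obtain ⟨hLlt, hLmem⟩ := hL
  have hdecomp : w = w.take (t.nextIdx w) ++ w.getD (t.nextIdx w) 0 :: w.drop (t.nextIdx w + 1) :=
    (take_getD_drop hLlt).symm
  refine ⟨hLmem, ?_, ?_⟩
  · conv_lhs => rw [hdecomp]
    exact lex_append_left_lt (List.Lex.rel (by omega))
  · intro v hv hlt
    rcases lt_decomp hlt with hp | ⟨p, a, s, b, r, hu, hv', hab⟩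
    · exact absurd hp (hnoext _ hv hlt)
    · have hc : t.Cand w p.length := t.cand_of_lt hv hu hv' hab
      have hple : p.length ≤ t.nextIdx w := Nat.le_findGreatest (le_of_lt hc.1) hc
      rcases eq_or_lt_of_le hple with heq | hplt
      · have hpw : p = w.take (t.nextIdx w) := by
          rw [← heq]
          conv_rhs => rw [hu]
          rw [take_append_cons]
        have haw : a = w.getD (t.nextIdx w) 0 := by
          rw [← heq]
          conv_rhs => rw [hu]
          rw [getD_append_cons]
        rw [nextWord, ← hpw, ← haw, hv']
        apply lex_append_left_le
        rcases eq_or_lt_of_le (show a + 1 ≤ b by omega) with rfl | h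
        · exact le_of_prefix ⟨r, rfl⟩
        · exact le_of_lt (List.Lex.rel h)
      · apply le_of_lt
        have htake : (t.nextWord w).take (p.length + 1) = p ++ [a] := by
          rw [nextWord, take_append_take (by omega) (le_of_lt hLlt), hu,
            show p ++ a :: s = (p ++ [a]) ++ s by simp, List.take_left' (by simp)]
        have hdec : t.nextWord w = p ++ a :: (t.nextWord w).drop (p.length + 1) := by
          conv_lhs => rw [← List.take_append_drop (p.length + 1) (t.nextWord w), htake]
          simp
        rw [hdec, hv']
        exact lex_append_left_lt (List.Lex.rel hab)

theorem succ_of_kids_zero {j : ℕ} (hj : j + 1 < t.verts.card)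
    (hk : t.kids (t.vtx j) = 0) : t.vtx (j + 1) = t.nextWord (t.vtx j) := by
  obtain ⟨h1, h2, h3⟩ := t.nextWord_spec hk (t.vtx_mem hj)
    (t.vtx_strictMonoOn (Nat.lt_succ_self j) hj)
  exact t.vtx_succ_eq hj h1 h2 h3

end OTree
namespace OTree

theorem eq_of_kidSeq {t t' : OTree} (hcard : t.verts.card = t'.verts.card)
    (hkids : ∀ j < t.verts.card, t.kids (t.vtx j) = t'.kids (t'.vtx j)) : t = t' := by
  have hvtx : ∀ j, j < t.verts.card → t.vtx j = t'.vtx j := by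
    intro j
    induction j using Nat.strong_induction_on with
    | _ j ih =>
      cases j with
      | zero => intro hj; rw [t.vtx_zero, t'.vtx_zero]
      | succ j =>
        intro hj
        have hjlt : j < t.verts.card := by omega
        have hw : t.vtx j = t'.vtx j := ih j (by omega) hjlt
        have hpref : ∀ u, u <+: t.vtx j → t.kids u = t'.kids u := by
          intro u hu
          have humem : u ∈ t.verts := t.prefix_mem (t.vtx_mem hjlt) hu
          obtain ⟨i, hi, hvi⟩ := t.exists_vtx humem
          have hij : i ≤ j := by
            by_contra hlt
            have := t.vtx_strictMonoOn (show j < i by omega) hi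
            rw [hvi] at this
            exact absurd (le_of_prefix hu) (not_le_of_gt this)
          have hvi' : t'.vtx i = u := by rw [← ih i (by omega) (by omega)]; exact hvi
          calc t.kids u = t.kids (t.vtx i) := by rw [hvi]
            _ = t'.kids (t'.vtx i) := hkids i (by omega)
            _ = t'.kids u := by rw [hvi']
        have hmem_iff : ∀ u (c : ℕ), u <+: t.vtx j →
            (u ++ [c] ∈ t.verts ↔ u ++ [c] ∈ t'.verts) := by
          intro u c hu
          rw [t.snoc_mem_iff, t'.snoc_mem_iff, hpref u hu]
        have hcard' : j + 1 < t'.verts.card := by omega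
        rcases Nat.eq_zero_or_pos (t.kids (t.vtx j)) with h0 | hpos
        · have h0' : t'.kids (t'.vtx j) = 0 := by rw [← hkids j hjlt]; exact h0
          rw [t.succ_of_kids_zero hj h0, t'.succ_of_kids_zero hcard' h0', ← hw]
          have hCand : ∀ ℓ, t.Cand (t.vtx j) ℓ ↔ t'.Cand (t.vtx j) ℓ := by
            intro ℓ
            simp only [Cand]
            constructor
            · rintro ⟨h1, h2⟩; exact ⟨h1, (hmem_iff _ _ (List.take_prefix _ _)).mp h2⟩
            · rintro ⟨h1, h2⟩; exact ⟨h1, (hmem_iff _ _ (List.take_prefix _ _)).mpr h2⟩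
          have hIdx : t.nextIdx (t.vtx j) = t'.nextIdx (t.vtx j) := by
            unfold nextIdx
            exact findGreatest_congr hCand _
          rw [nextWord, nextWord, ← hIdx]
        · have hpos' : 0 < t'.kids (t'.vtx j) := by rw [← hkids j hjlt]; exact hpos
          rw [t.succ_of_kids_pos hj hpos, t'.succ_of_kids_pos hcard' hpos', hw]
  have hverts : t.verts = t'.verts := by
    ext v
    constructor
    · intro hv
      obtain ⟨i, hi, rfl⟩ := t.exists_vtx hv
      rw [hvtx i hi]
      exact t'.vtx_mem (by omega)
    · intro hv
      obtain ⟨i, hi, rfl⟩ := t'.exists_vtx hv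
      rw [← hvtx i (by omega)]
      exact t.vtx_mem (by omega)
  cases t; cases t'; simp_all

end OTree
section Infra

open MeasureTheory
open scoped ENNReal

/-- index of a finite path: a length and the sequence of steps -/
abbrev PIdx := Σ m : ℕ, Fin m → ℤ

/-- the steps of `p` as a function on `ℕ` (0 beyond the length) -/
noncomputable def zf (p : PIdx) (j : ℕ) : ℤ := if h : j < p.1 then p.2 ⟨j, h⟩ else 0

/-- partial sums of the steps -/
noncomputable def psum (p : PIdx) (j : ℕ) : ℤ := ∑ i ∈ Finset.range j, zf p i

/-- `p` is a path that hits `-1` exactly at its final time -/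
def PValid (p : PIdx) : Prop := (∀ j < p.1, psum p j ≠ -1) ∧ psum p p.1 = -1

/-- the `ρ`-weight of the path `p` -/
noncomputable def wt (μ : PMF ℕ) (p : PIdx) : ℝ≥0∞ :=
  ∏ j ∈ Finset.range p.1, stepLaw μ (zf p j)

/-- compatibility of the stopped path with the data `x` up to time `n` -/
def PCompat (n : ℕ) (x : ℕ → ℤ) (p : PIdx) : Prop := ∀ j ≤ n, psum p (min j p.1) = x j

theorem pidx_ext {p q : PIdx} (h1 : p.1 = q.1) (h2 : ∀ j, j < p.1 → zf p j = zf q j) :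
    p = q := by
  obtain ⟨m, f⟩ := p
  obtain ⟨m', g⟩ := q
  cases h1
  simp only [Sigma.mk.inj_iff, heq_eq_eq, true_and]
  funext ⟨j, hj⟩
  have := h2 j hj
  rw [zf, zf, dif_pos hj, dif_pos hj] at this
  exact this

theorem tsum_stepLaw (μ : PMF ℕ) : ∑' z : ℤ, stepLaw μ z = 1 := by
  have hinj : Function.Injective (fun k : ℕ => (k : ℤ) - 1) := fun a b h => by
    simpa using h
  have hsupp : Function.support (stepLaw μ) ⊆ Set.range (fun k : ℕ => (k : ℤ) - 1) := by
    intro z hz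
    rw [Function.mem_support, stepLaw] at hz
    by_cases h : -1 ≤ z
    · exact ⟨(z + 1).toNat, by show ((z + 1).toNat : ℤ) - 1 = z; omega⟩
    · exact absurd (if_neg h) hz
  rw [← Function.Injective.tsum_eq hinj hsupp]
  calc ∑' k : ℕ, stepLaw μ ((k : ℤ) - 1) = ∑' k : ℕ, μ k := by
        apply tsum_congr
        intro k
        rw [stepLaw, if_pos (by omega)]
        congr 1
        omega
    _ = 1 := μ.tsum_coe

theorem tsum_pi_prod (μ : PMF ℕ) :
    ∀ N, ∑' w : Fin N → ℤ, ∏ j, stepLaw μ (w j) = 1 := by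
  intro N
  induction N with
  | zero =>
      rw [tsum_eq_single (fun i : Fin 0 => (0 : ℤ))
        (fun b hb => absurd (funext fun i => i.elim0) hb)]
      simp
  | succ N ih =>
      rw [← Equiv.tsum_eq (Fin.consEquiv (fun _ : Fin (N + 1) => ℤ))
        (fun w => ∏ j, stepLaw μ (w j))]
      calc ∑' q : ℤ × (Fin N → ℤ), ∏ j, stepLaw μ ((Fin.consEquiv (fun _ => ℤ)) q j)
          = ∑' q : ℤ × (Fin N → ℤ), stepLaw μ q.1 * ∏ j, stepLaw μ (q.2 j) := by
            apply tsum_congr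
            intro q
            obtain ⟨a, w⟩ := q
            simp only [Fin.consEquiv_apply]
            rw [Fin.prod_univ_succ]
            simp
        _ = ∑' a : ℤ, ∑' w : Fin N → ℤ, stepLaw μ a * ∏ j, stepLaw μ (w j) := by
            exact ENNReal.tsum_prod (f := fun (a : ℤ) (w : Fin N → ℤ) => stepLaw μ a * ∏ j, stepLaw μ (w j))
        _ = ∑' a : ℤ, stepLaw μ a * ∑' w : Fin N → ℤ, ∏ j, stepLaw μ (w j) := by
            apply tsum_congr; intro a; exact ENNReal.tsum_mul_left
        _ = 1 := by rw [ih]; simpa using tsum_stepLaw μ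

theorem partition_meas {Ω : Type*} [MeasurableSpace Ω] (P : Measure Ω)
    [IsProbabilityMeasure P] {ι : Type*} [Countable ι] (A : ι → Set Ω)
    (hcov : ∀ ω, ∃ i, ω ∈ A i) (hsum : ∑' i, P (A i) ≤ 1) (I : Set ι) :
    P (⋃ i ∈ I, A i) = ∑' i : I, P (A i) := by
  have hle : P (⋃ i ∈ I, A i) ≤ ∑' i : I, P (A i) :=
    measure_biUnion_le P (Set.to_countable I) A
  refine le_antisymm hle ?_
  have hc : P (⋃ i ∈ Iᶜ, A i) ≤ ∑' i : ↑Iᶜ, P (A i) :=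
    measure_biUnion_le P (Set.to_countable Iᶜ) A
  have hsplit : ∑' i : I, P (A i) + ∑' i : ↑Iᶜ, P (A i) = ∑' i, P (A i) :=
    Summable.tsum_add_tsum_compl (f := fun i => P (A i)) (s := I) ENNReal.summable ENNReal.summable
  have hcover : (Set.univ : Set Ω) ⊆ (⋃ i ∈ I, A i) ∪ ⋃ i ∈ Iᶜ, A i := by
    intro ω _
    obtain ⟨i, hi⟩ := hcov ω
    by_cases h : i ∈ I
    · exact Or.inl (Set.mem_biUnion h hi)
    · exact Or.inr (Set.mem_biUnion h hi)
  have h1 : (1 : ℝ≥0∞) ≤ P (⋃ i ∈ I, A i) + P (⋃ i ∈ Iᶜ, A i) := by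
    calc (1 : ℝ≥0∞) = P Set.univ := (measure_univ (μ := P)).symm
      _ ≤ P ((⋃ i ∈ I, A i) ∪ ⋃ i ∈ Iᶜ, A i) := measure_mono hcover
      _ ≤ _ := measure_union_le _ _
  have hfin : ∑' i : ↑Iᶜ, P (A i) ≠ ⊤ := by
    intro h
    rw [← hsplit, h] at hsum
    simp at hsum
  rw [← ENNReal.add_le_add_iff_right hfin]
  calc ∑' i : I, P (A i) + ∑' i : ↑Iᶜ, P (A i) = ∑' i, P (A i) := hsplit
    _ ≤ 1 := hsum
    _ ≤ P (⋃ i ∈ I, A i) + P (⋃ i ∈ Iᶜ, A i) := h1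
    _ ≤ P (⋃ i ∈ I, A i) + ∑' i : ↑Iᶜ, P (A i) := add_le_add_right hc _

end Infra
section Cylinders
set_option linter.unusedSectionVars false

open MeasureTheory
open scoped ENNReal

variable {Ω : Type*} [MeasurableSpace Ω] (P : Measure Ω) [IsProbabilityMeasure P]
  (μ : PMF ℕ) (ξ : ℕ → Ω → ℤ)

/-- the cylinder event determined by the path `p` -/
def Cyl (p : PIdx) : Set Ω := {ω | ∀ j < p.1, ξ j ω = zf p j}

/-- the level-`N` cylinder event determined by `w` -/
def AL (N : ℕ) (w : Fin N → ℤ) : Set Ω := {ω | ∀ j : Fin N, ξ j ω = w j}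

variable (hiid : ∀ (n : ℕ) (z : ℕ → ℤ),
    P {ω | ∀ j < n, ξ j ω = z j} = ∏ j ∈ Finset.range n, stepLaw μ (z j))

include hiid

theorem P_Cyl (p : PIdx) : P (Cyl ξ p) = wt μ p := hiid p.1 (zf p)

theorem P_AL (N : ℕ) (w : Fin N → ℤ) : P (AL ξ N w) = ∏ j, stepLaw μ (w j) := by
  have h := hiid N (fun j => if h : j < N then w ⟨j, h⟩ else 0)
  have hset : {ω | ∀ j < N, ξ j ω = if h : j < N then w ⟨j, h⟩ else 0} = AL ξ N w := by
    ext ω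
    constructor
    · intro h' j
      have := h' j j.2
      rwa [dif_pos j.2] at this
    · intro h' j hj
      rw [dif_pos hj]
      exact h' ⟨j, hj⟩
  rw [hset] at h
  rw [h, ← Fin.prod_univ_eq_prod_range
    (fun j => stepLaw μ (if h : j < N then w ⟨j, h⟩ else 0)) N]
  exact Finset.prod_congr rfl fun j _ => by rw [dif_pos j.2]

omit hiid

theorem prod_wext (N : ℕ) (w : Fin N → ℤ) :
    ∏ j ∈ Finset.range N, stepLaw μ (if h : j < N then w ⟨j, h⟩ else 0)
      = ∏ j, stepLaw μ (w j) := by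
  rw [← Fin.prod_univ_eq_prod_range (fun j => stepLaw μ (if h : j < N then w ⟨j, h⟩ else 0)) N]
  exact Finset.prod_congr rfl fun j _ => by rw [dif_pos j.2]

/-- the set of level-`N` extensions of the path `p` -/
def ExtSet (N : ℕ) (p : PIdx) : Set (Fin N → ℤ) :=
  {w | ∀ j : Fin N, (j : ℕ) < p.1 → w j = zf p (j : ℕ)}

noncomputable def extEquiv (N : ℕ) (p : PIdx) (hpN : p.1 ≤ N) :
    (Fin (N - p.1) → ℤ) ≃ ExtSet N p where
  toFun g := ⟨fun j => if h : (j : ℕ) < p.1 then zf p j else g ⟨(j : ℕ) - p.1, by omega⟩,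
    fun j hj => dif_pos hj⟩
  invFun w i := (w : Fin N → ℤ) ⟨p.1 + i, by omega⟩
  left_inv g := by
    funext i
    simp only []
    rw [dif_neg (show ¬ (p.1 + (i : ℕ) < p.1) by omega)]
    exact congrArg g (Fin.ext (show p.1 + (i : ℕ) - p.1 = (i : ℕ) by omega))
  right_inv w := by
    apply Subtype.ext
    funext j
    simp only []
    by_cases h : (j : ℕ) < p.1
    · rw [dif_pos h]
      exact (w.2 j h).symm
    · rw [dif_neg h]
      exact congrArg _ (Fin.ext (by simp; omega))

theorem extEquiv_apply_coe (N : ℕ) (p : PIdx) (hpN : p.1 ≤ N) (g : Fin (N - p.1) → ℤ)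
    (j : Fin N) :
    (extEquiv N p hpN g : Fin N → ℤ) j
      = if h : (j : ℕ) < p.1 then zf p (j : ℕ) else g ⟨(j : ℕ) - p.1, by omega⟩ := rfl

theorem ext_sum (N : ℕ) (p : PIdx) (hpN : p.1 ≤ N) :
    ∑' w : ExtSet N p, ∏ j, stepLaw μ ((w : Fin N → ℤ) j) = wt μ p := by
  classical
  rw [← (extEquiv N p hpN).tsum_eq]
  have hprod : ∀ g : Fin (N - p.1) → ℤ,
      (∏ j, stepLaw μ ((extEquiv N p hpN g : Fin N → ℤ) j))
        = wt μ p * ∏ i, stepLaw μ (g i) := by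
    intro g
    rw [← prod_wext μ N (extEquiv N p hpN g : Fin N → ℤ)]
    rw [show (∏ j ∈ Finset.range N, stepLaw μ
        (if h : j < N then (extEquiv N p hpN g : Fin N → ℤ) ⟨j, h⟩ else 0))
      = ∏ j ∈ Finset.range (p.1 + (N - p.1)), stepLaw μ
        (if h : j < N then (extEquiv N p hpN g : Fin N → ℤ) ⟨j, h⟩ else 0) by
        rw [show p.1 + (N - p.1) = N by omega]]
    rw [Finset.prod_range_add]
    congr 1
    · rw [wt]
      apply Finset.prod_congr rfl
      intro j hj
      have hjm : j < p.1 := Finset.mem_range.mp hj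
      rw [dif_pos (by omega : j < N), extEquiv_apply_coe]
      exact congrArg (stepLaw μ) (dif_pos hjm)
    · calc ∏ x ∈ Finset.range (N - p.1), stepLaw μ
            (if h : p.1 + x < N then (extEquiv N p hpN g : Fin N → ℤ) ⟨p.1 + x, h⟩ else 0)
          = ∏ x ∈ Finset.range (N - p.1), stepLaw μ
            (if h : x < N - p.1 then g ⟨x, h⟩ else 0) := by
            apply Finset.prod_congr rfl
            intro i hi
            have him : i < N - p.1 := Finset.mem_range.mp hi
            rw [dif_pos (by omega : p.1 + i < N), extEquiv_apply_coe,
              dif_neg (show ¬ (p.1 + i < p.1) by omega), dif_pos him]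
            exact congrArg (fun z => stepLaw μ (g z))
              (Fin.ext (show p.1 + i - p.1 = i by omega))
        _ = ∏ i, stepLaw μ (g i) := prod_wext μ (N - p.1) g
  calc ∑' g : Fin (N - p.1) → ℤ, ∏ j, stepLaw μ ((extEquiv N p hpN g : Fin N → ℤ) j)
      = ∑' g : Fin (N - p.1) → ℤ, wt μ p * ∏ i, stepLaw μ (g i) := tsum_congr hprod
    _ = wt μ p * ∑' g : Fin (N - p.1) → ℤ, ∏ i, stepLaw μ (g i) := ENNReal.tsum_mul_left
    _ = wt μ p := by rw [tsum_pi_prod μ (N - p.1), mul_one]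

include hiid

theorem horizon (V : Set PIdx) (hV : ∀ p ∈ V, PValid p) {N : ℕ} (hN : ∀ p ∈ V, p.1 ≤ N) :
    P (⋃ p ∈ V, Cyl ξ p) = ∑' p : V, wt μ (p : PIdx) ∧
    P ((⋃ p ∈ V, Cyl ξ p)ᶜ) ≤ 1 - ∑' p : V, wt μ (p : PIdx) := by
  classical
  let B : V → Set (Fin N → ℤ) := fun p => ExtSet N (p : PIdx)
  let W : Set (Fin N → ℤ) := ⋃ p : V, B p
  -- the union of the path cylinders is the union of the level-N cylinders over W
  have hUnion : (⋃ p ∈ V, Cyl ξ p) = ⋃ w ∈ W, AL ξ N w := by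
    ext ω
    simp only [Set.mem_iUnion]
    constructor
    · rintro ⟨p, hp, hω⟩
      refine ⟨fun j => ξ j ω, ⟨?_, ?_⟩⟩
      · rw [Set.mem_iUnion]
        exact ⟨⟨p, hp⟩, fun j hj => hω j hj⟩
      · intro j; rfl
    · rintro ⟨w, hwW, hω⟩
      rw [Set.mem_iUnion] at hwW
      obtain ⟨⟨p, hp⟩, hwp⟩ := hwW
      refine ⟨p, hp, fun j hj => ?_⟩
      have hjN : j < N := lt_of_lt_of_le hj (hN p hp)
      calc ξ j ω = w ⟨j, hjN⟩ := hω ⟨j, hjN⟩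
        _ = zf p j := hwp ⟨j, hjN⟩ hj
  -- the extension sets are pairwise disjoint
  have hdisj : Pairwise (Function.onFun Disjoint B) := by
    intro p q hpq
    simp only [Function.onFun, B]
    rw [Set.disjoint_left]
    intro w hwp hwq
    apply hpq
    have key : ∀ a b : PIdx, a ∈ V → b ∈ V → w ∈ ExtSet N a → w ∈ ExtSet N b →
        a.1 ≤ b.1 → a = b := by
      intro a b ha hb hwa hwb hab
      have hzf : ∀ j, j < a.1 → zf a j = zf b j := by
        intro j hj
        have hjN : j < N := lt_of_lt_of_le hj (hN a ha)
        calc zf a j = w ⟨j, hjN⟩ := (hwa ⟨j, hjN⟩ hj).symm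
          _ = zf b j := hwb ⟨j, hjN⟩ (lt_of_lt_of_le hj hab)
      have h1 : a.1 = b.1 := by
        by_contra hne
        have hlt : a.1 < b.1 := by omega
        have hps : psum b a.1 = psum a a.1 :=
          Finset.sum_congr rfl fun i hi => (hzf i (Finset.mem_range.mp hi)).symm
        have hb1 := (hV b hb).1 a.1 hlt
        rw [hps] at hb1
        exact hb1 (hV a ha).2
      exact pidx_ext h1 hzf
    rcases le_total (p : PIdx).1 (q : PIdx).1 with h | h
    · exact Subtype.ext (key _ _ p.2 q.2 hwp hwq h)
    · exact Subtype.ext (key _ _ q.2 p.2 hwq hwp h).symm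
  -- probability of a union of level-N cylinders
  have hPA : ∀ w : Fin N → ℤ, P (AL ξ N w) = ∏ j, stepLaw μ (w j) := P_AL P μ ξ hiid N
  have htot : ∑' w : Fin N → ℤ, P (AL ξ N w) ≤ 1 := by
    rw [tsum_congr hPA, tsum_pi_prod μ N]
  have hcov : ∀ ω : Ω, ∃ w : Fin N → ℤ, ω ∈ AL ξ N w := fun ω =>
    ⟨fun j => ξ j ω, fun j => rfl⟩
  have hpart := partition_meas P (AL ξ N) hcov htot W
  have hpartc := partition_meas P (AL ξ N) hcov htot Wᶜ
  -- regrouping the sum over W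
  have hregroup : ∑' w : W, P (AL ξ N (w : Fin N → ℤ)) = ∑' p : V, wt μ (p : PIdx) := by
    rw [tsum_congr (fun w : W => hPA (w : Fin N → ℤ))]
    set e : (Σ p : V, B p) ≃ ↑(⋃ p : V, B p) :=
      Equiv.ofBijective _ (Set.sigmaToiUnion_bijective B hdisj) with he
    rw [← Equiv.tsum_eq e (fun w : W => ∏ j, stepLaw μ ((w : Fin N → ℤ) j))]
    calc ∑' σ : (Σ p : V, B p), ∏ j, stepLaw μ (((e σ) : Fin N → ℤ) j)
        = ∑' σ : (Σ p : V, B p), ∏ j, stepLaw μ (((σ.2 : Fin N → ℤ)) j) := by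
          apply tsum_congr; intro σ; rw [he]; rfl
      _ = ∑' p : V, ∑' w : B p, ∏ j, stepLaw μ ((w : Fin N → ℤ) j) :=
          ENNReal.tsum_sigma
            (fun (p : V) (w : B p) => ∏ j, stepLaw μ ((w : Fin N → ℤ) j))
      _ = ∑' p : V, wt μ (p : PIdx) :=
          tsum_congr fun p => ext_sum μ N (p : PIdx) (hN _ p.2)
  have hsum1 : ∑' w : Fin N → ℤ, P (AL ξ N w) = 1 := by
    rw [tsum_congr hPA, tsum_pi_prod μ N]
  constructor
  · rw [hUnion, hpart, hregroup]
  · -- complement bound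
    have hsub : (⋃ p ∈ V, Cyl ξ p)ᶜ ⊆ ⋃ w ∈ Wᶜ, AL ξ N w := by
      intro ω hω
      obtain ⟨w, hw⟩ := hcov ω
      by_cases hWw : w ∈ W
      · exfalso
        apply hω
        rw [hUnion]
        exact Set.mem_biUnion hWw hw
      · exact Set.mem_biUnion hWw hw
    have hcompl : ∑' w : ↑Wᶜ, P (AL ξ N (w : Fin N → ℤ))
        = 1 - ∑' w : W, P (AL ξ N (w : Fin N → ℤ)) := by
      have := Summable.tsum_add_tsum_compl (f := fun w : Fin N → ℤ => P (AL ξ N w)) (s := W)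
        ENNReal.summable ENNReal.summable
      rw [hsum1] at this
      have hfin : ∑' w : W, P (AL ξ N (w : Fin N → ℤ)) ≠ ⊤ := by
        intro hc
        rw [hc] at this
        simp at this
      exact ENNReal.eq_sub_of_add_eq hfin (by rw [add_comm] at this; exact this)
    calc P ((⋃ p ∈ V, Cyl ξ p)ᶜ) ≤ P (⋃ w ∈ Wᶜ, AL ξ N w) := measure_mono hsub
      _ = ∑' w : ↑Wᶜ, P (AL ξ N (w : Fin N → ℤ)) := hpartc
      _ = 1 - ∑' w : W, P (AL ξ N (w : Fin N → ℤ)) := hcompl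
      _ = 1 - ∑' p : V, wt μ (p : PIdx) := by rw [hregroup]

end Cylinders
namespace OTree

open scoped ENNReal

/-- the path associated with a tree -/
noncomputable def Θ (t : OTree) : PIdx :=
  ⟨t.verts.card, fun j => (t.kids (t.vtx j) : ℤ) - 1⟩

theorem zf_Θ {t : OTree} {j : ℕ} (hj : j < t.verts.card) :
    zf (Θ t) j = (t.kids (t.vtx j) : ℤ) - 1 := dif_pos hj

theorem psum_Θ {t : OTree} {j : ℕ} (hj : j ≤ t.verts.card) : psum (Θ t) j = t.D j := by
  rw [psum, D]
  exact Finset.sum_congr rfl fun i hi =>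
    zf_Θ (lt_of_lt_of_le (Finset.mem_range.mp hi) hj)

theorem valid_Θ (t : OTree) : PValid (Θ t) := by
  constructor
  · intro j hj
    rw [psum_Θ (le_of_lt hj)]
    have := t.D_nonneg hj
    omega
  · rw [show (Θ t).1 = t.verts.card from rfl, psum_Θ le_rfl]
    exact t.D_card_eq

theorem wt_Θ (μ : PMF ℕ) (t : OTree) : wt μ (Θ t) = ∏ u ∈ t.verts, μ (t.kids u) := by
  rw [wt]
  calc ∏ j ∈ Finset.range t.verts.card, stepLaw μ (zf (Θ t) j)
      = ∏ j ∈ Finset.range t.verts.card, μ (t.kids (t.vtx j)) := by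
        apply Finset.prod_congr rfl
        intro j hj
        rw [zf_Θ (Finset.mem_range.mp hj), stepLaw, if_pos (by omega)]
        congr 1
        omega
    _ = ∏ u ∈ t.verts, μ (t.kids u) := by
        apply Finset.prod_nbij (fun j => t.vtx j)
        · intro j hj
          exact t.vtx_mem (Finset.mem_range.mp hj)
        · intro a ha b hb hab
          simp only [Finset.coe_range, Set.mem_Iio] at ha hb
          exact t.vtx_injOn ha hb hab
        · intro u hu
          simp only [Finset.coe_range, Set.mem_Iio, Set.mem_image]
          obtain ⟨i, hi, hvi⟩ := t.exists_vtx (by simpa using hu)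
          exact ⟨i, hi, hvi⟩
        · intro j hj
          rfl

theorem Θ_injective : Function.Injective Θ := by
  intro t t' h
  have h1 : t.verts.card = t'.verts.card := congrArg Sigma.fst h
  apply eq_of_kidSeq h1
  intro j hj
  have hzf : zf (Θ t) j = zf (Θ t') j := by rw [h]
  rw [zf_Θ hj, zf_Θ (h1 ▸ hj)] at hzf
  omega

theorem compat_Θ (t : OTree) (n : ℕ) (x : ℕ → ℤ) :
    PCompat n x (Θ t) ↔ ∀ j ≤ n, t.D (min j t.verts.card) = x j := by
  have hfst : (Θ t).1 = t.verts.card := rfl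
  constructor
  · intro h j hj
    have := h j hj
    rw [hfst] at this
    rwa [psum_Θ (min_le_right _ _)] at this
  · intro h j hj
    rw [hfst, psum_Θ (min_le_right _ _)]
    exact h j hj

instance : Countable OTree := by
  have hinj : Function.Injective (fun t : OTree => t.verts) := by
    intro t t' h
    cases t; cases t'; simpa using h
  exact hinj.countable

end OTree
open MeasureTheory
open scoped ENNReal

/-- If `τ` is a (sub)critical Galton-Watson tree with offspring
distribution `μ`, then its Lukasiewicz path `D(τ)` (stopped at time `#τ`, where it
equals `-1`) is distributed as a random walk started at `0`, stopped at its first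
hitting time of `-1`, with jump distribution `ρ(k) = μ(k+1)`, `k ≥ -1`. -/
theorem lukasiewicz_of_GW_is_stopped_random_walk
    {Ω : Type*} [MeasurableSpace Ω] (P : Measure Ω) [IsProbabilityMeasure P]
    (μ : PMF ℕ) (hsub : ∑' k : ℕ, (k : ℝ≥0∞) * μ k ≤ 1)
    (τ : Ω → OTree)
    -- `τ` is a Galton-Watson tree with offspring distribution `μ`:
    (hGW : ∀ t : OTree, P {ω | τ ω = t} = ∏ u ∈ t.verts, μ (t.kids u))
    -- `(ξ_j)` are i.i.d. jumps with distribution `ρ(k) = μ(k+1)`, `k ≥ -1`: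
    (ξ : ℕ → Ω → ℤ)
    (hiid : ∀ (n : ℕ) (z : ℕ → ℤ),
      P {ω | ∀ j < n, ξ j ω = z j} = ∏ j ∈ Finset.range n, stepLaw μ (z j))
    -- `S` is the associated random walk started at `0`, `T` its hitting time of `-1`:
    (S : ℕ → Ω → ℤ) (hS : ∀ n ω, S n ω = ∑ j ∈ Finset.range n, ξ j ω)
    (T : Ω → ℕ) (hT : ∀ ω, T ω = sInf {n | S n ω = -1}) :
    ∀ (n : ℕ) (x : ℕ → ℤ),
      P {ω | ∀ j ≤ n, (τ ω).D (min j (τ ω).verts.card) = x j}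
        = P {ω | ∀ j ≤ n, S (min j (T ω)) ω = x j} := by
  intro n x
  classical
  set Vd : Set PIdx := {p | PValid p} with hVd
  set VC : Set PIdx := {p | PValid p ∧ PCompat n x p} with hVCdef
  set R : Set PIdx := Set.range OTree.Θ with hRdef
  -- monotonicity of subtype sums of weights
  have hmono : ∀ s u : Set PIdx, s ⊆ u → ∑' p : s, wt μ ↑p ≤ ∑' p : u, wt μ ↑p := by
    intro s u hsu
    rw [tsum_subtype, tsum_subtype]
    exact Summable.tsum_le_tsum
      (fun p => Set.indicator_le_indicator_of_subset hsu (fun _ => zero_le) p)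
      ENNReal.summable ENNReal.summable
  -- a finite sum over a subtype is a tsum over the image set
  have hfineq : ∀ (V : Set PIdx) (F : Finset ↑V),
      ∑ p ∈ F, wt μ ↑p
        = ∑' q : (↑(F.image (fun p : ↑V => (p : PIdx))) : Set PIdx), wt μ ↑q := by
    intro V F
    rw [Finset.tsum_subtype']
    exact (Finset.sum_image fun a _ b _ h => Subtype.ext h).symm
  have himgsub : ∀ (V : Set PIdx) (F : Finset ↑V) (U : Set PIdx),
      (∀ p : ↑V, p ∈ F → (p : PIdx) ∈ U) →
      (↑(F.image (fun p : ↑V => (p : PIdx))) : Set PIdx) ⊆ U := by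
    intro V F U hFU q hq
    simp only [Finset.coe_image, Set.mem_image, Finset.mem_coe] at hq
    obtain ⟨p, hp, rfl⟩ := hq
    exact hFU p hp
  -- a countable family of valid cylinders: the sum is dominated by the measure of the union
  have hV_le : ∀ V : Set PIdx, (∀ p ∈ V, PValid p) →
      ∑' p : V, wt μ ↑p ≤ P (⋃ p ∈ V, Cyl ξ p) := by
    intro V hV
    rw [ENNReal.tsum_eq_iSup_sum]
    apply iSup_le
    intro F
    set Vf : Set PIdx := (↑(F.image (fun p : ↑V => (p : PIdx))) : Set PIdx) with hVf
    have hVfsub : Vf ⊆ V := himgsub V F V (fun p _ => p.2)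
    have hhor := (horizon P μ ξ hiid Vf (fun p hp => hV p (hVfsub hp))
      (N := F.sup (fun p : ↑V => (p : PIdx).1)) ?_).1
    · calc ∑ p ∈ F, wt μ ↑p = ∑' q : Vf, wt μ ↑q := hfineq V F
        _ = P (⋃ p ∈ Vf, Cyl ξ p) := hhor.symm
        _ ≤ P (⋃ p ∈ V, Cyl ξ p) :=
            measure_mono (Set.biUnion_subset_biUnion_left hVfsub)
    · intro q hq
      rw [hVf] at hq
      simp only [Finset.coe_image, Set.mem_image, Finset.mem_coe] at hq
      obtain ⟨p, hp, rfl⟩ := hq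
      exact Finset.le_sup (f := fun p : ↑V => (p : PIdx).1) hp
  -- the tree partition
  have hwtP : ∀ t : OTree, P {ω | τ ω = t} = wt μ (OTree.Θ t) := fun t => by
    rw [hGW t, OTree.wt_Θ]
  have htreecov : ∀ ω : Ω, ∃ t : OTree, ω ∈ {ω' | τ ω' = t} := fun ω => ⟨τ ω, rfl⟩
  have htree_tsum : ∑' t : OTree, wt μ (OTree.Θ t) = ∑' p : R, wt μ ↑p := by
    rw [hRdef, ← Equiv.tsum_eq (Equiv.ofInjective _ OTree.Θ_injective)
      (fun p : Set.range OTree.Θ => wt μ ↑p)]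
    exact tsum_congr fun t => rfl
  have hRvalid : ∀ p ∈ R, PValid p := by
    rintro p ⟨t, rfl⟩
    exact OTree.valid_Θ t
  have hRle1 : ∑' p : R, wt μ ↑p ≤ 1 := le_trans (hV_le R hRvalid) prob_le_one
  have htreesum_le : ∑' t : OTree, P {ω | τ ω = t} ≤ 1 := by
    rw [tsum_congr hwtP, htree_tsum]
    exact hRle1
  have htree_eq : ∀ I : Set OTree, P {ω | τ ω ∈ I} = ∑' t : I, wt μ (OTree.Θ ↑t) := by
    intro I
    have hun : {ω | τ ω ∈ I} = ⋃ t ∈ I, {ω | τ ω = t} := by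
      ext ω
      simp only [Set.mem_setOf_eq, Set.mem_iUnion]
      constructor
      · intro h; exact ⟨τ ω, h, rfl⟩
      · rintro ⟨t, ht, hτ⟩; exact (show τ ω = t from hτ) ▸ ht
    rw [hun, partition_meas P _ htreecov htreesum_le I]
    exact tsum_congr fun t => hwtP ↑t
  have hRsum : ∑' p : R, wt μ ↑p = 1 := by
    have h1 := htree_eq Set.univ
    rw [show {ω | τ ω ∈ Set.univ} = Set.univ from by ext; simp, measure_univ] at h1
    rw [← htree_tsum]
    rw [← tsum_univ (fun t : OTree => wt μ (OTree.Θ t))]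
    exact h1.symm
  have hVdsum : ∑' p : Vd, wt μ ↑p = 1 := by
    apply le_antisymm
    · exact le_trans (hV_le Vd (fun p hp => hp)) prob_le_one
    · rw [← hRsum]
      exact hmono R Vd hRvalid
  -- the valid paths outside the range of Θ have total weight zero
  have hcompl0 : ∑' p : ↑(Vd \ R), wt μ ↑p = 0 := by
    have hRVd : R ⊆ Vd := hRvalid
    have hsplit := Summable.tsum_union_disjoint (f := fun p => wt μ p) (s := R) (t := Vd \ R)
      Set.disjoint_sdiff_right ENNReal.summable ENNReal.summable
    rw [Set.union_diff_cancel hRVd, hVdsum, hRsum] at hsplit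
    exact ((ENNReal.add_right_inj ENNReal.one_ne_top).mp
      (by rw [add_zero]; exact hsplit)).symm
  set G : PIdx → ℝ≥0∞ := VC.indicator (wt μ) with hG
  -- the tree side
  have htreeside : P {ω | ∀ j ≤ n, (τ ω).D (min j (τ ω).verts.card) = x j} = ∑' p, G p := by
    set I : Set OTree := {t | ∀ j ≤ n, t.D (min j t.verts.card) = x j} with hI
    have h0 : {ω | ∀ j ≤ n, (τ ω).D (min j (τ ω).verts.card) = x j} = {ω | τ ω ∈ I} := rfl
    rw [h0, htree_eq I]
    have hGΘ : ∀ t : OTree, I.indicator (fun t => wt μ (OTree.Θ t)) t = G (OTree.Θ t) := by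
      intro t
      rw [hG, Set.indicator_apply, Set.indicator_apply]
      by_cases ht : t ∈ I
      · rw [if_pos ht, if_pos ⟨OTree.valid_Θ t, (OTree.compat_Θ t n x).mpr ht⟩]
      · rw [if_neg ht, if_neg (fun hc => ht ((OTree.compat_Θ t n x).mp hc.2))]
    calc ∑' t : I, wt μ (OTree.Θ ↑t)
        = ∑' t : OTree, I.indicator (fun t => wt μ (OTree.Θ t)) t := tsum_subtype I (fun t => wt μ (OTree.Θ t))
      _ = ∑' t : OTree, G (OTree.Θ t) := tsum_congr hGΘ
      _ = ∑' p : R, G ↑p := by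
          rw [hRdef, ← Equiv.tsum_eq (Equiv.ofInjective _ OTree.Θ_injective)
            (fun p : Set.range OTree.Θ => G ↑p)]
          exact tsum_congr fun t => rfl
      _ = ∑' p, G p := by
          have hsplit := Summable.tsum_add_tsum_compl (f := G) (s := R)
            ENNReal.summable ENNReal.summable
          have hzero : ∑' p : ↑Rᶜ, G ↑p = 0 := by
            have hle : ∀ p : ↑Rᶜ, G ↑p ≤ (Vd \ R).indicator (wt μ) ↑p := by
              intro p
              rw [hG, Set.indicator_apply, Set.indicator_apply]
              by_cases h : (p : PIdx) ∈ VC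
              · rw [if_pos h, if_pos ⟨h.1, p.2⟩]
              · rw [if_neg h]
                exact zero_le
            have h2 : ∑' p : ↑Rᶜ, (Vd \ R).indicator (wt μ) ↑p
                ≤ ∑' p : ↑(Vd \ R), wt μ ↑p := by
              rw [tsum_subtype, tsum_subtype]
              apply Summable.tsum_le_tsum _ ENNReal.summable ENNReal.summable
              intro p
              by_cases h : p ∈ (Rᶜ : Set PIdx)
              · rw [Set.indicator_of_mem h]
              · rw [Set.indicator_of_notMem h]
                exact zero_le
            have := le_trans (Summable.tsum_le_tsum hle ENNReal.summable ENNReal.summable)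
              (le_trans h2 (le_of_eq hcompl0))
            exact le_antisymm this (zero_le)
          rw [← hsplit, hzero, add_zero]
  -- the walk side
  have hS0 : ∀ ω, S 0 ω = 0 := fun ω => by rw [hS]; simp
  have hcylS : ∀ (p : PIdx) (ω : Ω), ω ∈ Cyl ξ p → ∀ j ≤ p.1, S j ω = psum p j := by
    intro p ω hω j hj
    rw [hS, psum]
    exact Finset.sum_congr rfl fun i hi =>
      hω i (lt_of_lt_of_le (Finset.mem_range.mp hi) hj)
  have hcylT : ∀ p : PIdx, PValid p → ∀ ω ∈ Cyl ξ p, T ω = p.1 := by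
    intro p hp ω hω
    rw [hT]
    apply le_antisymm
    · exact Nat.sInf_le (show S p.1 ω = -1 by rw [hcylS p ω hω p.1 le_rfl]; exact hp.2)
    · apply le_csInf ⟨p.1, show S p.1 ω = -1 by rw [hcylS p ω hω p.1 le_rfl]; exact hp.2⟩
      intro b hb
      by_contra hlt
      push_neg at hlt
      rw [Set.mem_setOf_eq, hcylS p ω hω b (le_of_lt hlt)] at hb
      exact hp.1 b hlt hb
  set Hit : Set Ω := {ω | ∃ m, S m ω = -1} with hHit
  set E : Set Ω := {ω | ∀ j ≤ n, S (min j (T ω)) ω = x j} with hE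
  have hEHit : E ∩ Hit = ⋃ p ∈ VC, Cyl ξ p := by
    ext ω
    constructor
    · rintro ⟨hωE, hωH⟩
      have hne : {m | S m ω = -1}.Nonempty := hωH
      have hmem : S (T ω) ω = -1 := by rw [hT]; exact Nat.sInf_mem hne
      have hmin : ∀ b, b < T ω → S b ω ≠ -1 := by
        intro b hb
        rw [hT] at hb
        exact Nat.notMem_of_lt_sInf hb
      set p : PIdx := ⟨T ω, fun j => ξ (j : ℕ) ω⟩ with hpdef
      have hzfp : ∀ j, j < T ω → zf p j = ξ j ω := fun j hj => dif_pos hj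
      have hωCyl : ω ∈ Cyl ξ p := fun j hj => (hzfp j hj).symm
      have hpsum : ∀ j, j ≤ T ω → psum p j = S j ω := by
        intro j hj
        rw [psum, hS]
        exact Finset.sum_congr rfl fun i hi =>
          hzfp i (lt_of_lt_of_le (Finset.mem_range.mp hi) hj)
      refine Set.mem_biUnion ?_ hωCyl
      refine ⟨⟨?_, ?_⟩, ?_⟩
      · intro j hj
        rw [hpsum j (le_of_lt hj)]
        exact hmin j hj
      · rw [hpsum _ le_rfl]
        exact hmem
      · intro j hj
        rw [hpsum _ (min_le_right _ _)]
        exact hωE j hj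
    · intro hω
      rw [Set.mem_iUnion] at hω
      obtain ⟨p, hω⟩ := hω
      rw [Set.mem_iUnion] at hω
      obtain ⟨hpVC, hωp⟩ := hω
      have hpT : T ω = p.1 := hcylT p hpVC.1 ω hωp
      constructor
      · intro j hj
        rw [hpT, hcylS p ω hωp _ (min_le_right _ _)]
        exact hpVC.2 j hj
      · exact ⟨p.1, by rw [hcylS p ω hωp p.1 le_rfl]; exact hpVC.1.2⟩
  have hVCvalid : ∀ p ∈ VC, PValid p := fun p hp => hp.1
  -- the walk hits -1 almost surely
  have hHitc : P Hitᶜ = 0 := by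
    have hbound : ∀ N : ℕ,
        P Hitᶜ + ∑' p : {p : PIdx | PValid p ∧ p.1 ≤ N}, wt μ ↑p ≤ 1 := by
      intro N
      set VN : Set PIdx := {p | PValid p ∧ p.1 ≤ N} with hVN
      have hhor := (horizon P μ ξ hiid VN (fun p hp => hp.1) (fun p hp => hp.2)).2
      have hsubc : Hitᶜ ⊆ (⋃ p ∈ VN, Cyl ξ p)ᶜ := by
        intro ω hω hc
        apply hω
        rw [Set.mem_iUnion] at hc
        obtain ⟨p, hc⟩ := hc
        rw [Set.mem_iUnion] at hc
        obtain ⟨hp, hωp⟩ := hc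
        exact ⟨p.1, by rw [hcylS p ω hωp p.1 le_rfl]; exact hp.1.2⟩
      have h1 : P Hitᶜ ≤ 1 - ∑' p : VN, wt μ ↑p :=
        le_trans (measure_mono hsubc) hhor
      have h2 : ∑' p : VN, wt μ ↑p ≤ 1 :=
        le_trans (hmono VN Vd (fun p hp => hp.1)) (le_of_eq hVdsum)
      calc P Hitᶜ + ∑' p : VN, wt μ ↑p
          ≤ (1 - ∑' p : VN, wt μ ↑p) + ∑' p : VN, wt μ ↑p := add_le_add_left h1 _
        _ = 1 := tsub_add_cancel_of_le h2
    have hsup : (⨆ N : ℕ, ∑' p : {p : PIdx | PValid p ∧ p.1 ≤ N}, wt μ ↑p) = 1 := by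
      apply le_antisymm
      · exact iSup_le fun N =>
          le_trans (hmono _ Vd (fun p hp => hp.1)) (le_of_eq hVdsum)
      · rw [← hVdsum, ENNReal.tsum_eq_iSup_sum]
        apply iSup_le
        intro F
        refine le_trans ?_ (le_iSup _ (F.sup (fun p : ↑Vd => (p : PIdx).1)))
        rw [hfineq Vd F]
        apply hmono
        apply himgsub
        intro p hp
        exact ⟨p.2, Finset.le_sup (f := fun p : ↑Vd => (p : PIdx).1) hp⟩
    have hfin : P Hitᶜ + 1 ≤ 1 := by
      conv_lhs => rw [← hsup]
      rw [ENNReal.add_iSup]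
      exact iSup_le fun N => hbound N
    exact le_antisymm ((ENNReal.add_le_add_iff_right ENNReal.one_ne_top).mp
      (by rw [zero_add]; exact hfin)) (zero_le)
  -- computing the walk-side probability
  have hwalkside : P E = ∑' p, G p := by
    have hle1 : P (⋃ p ∈ VC, Cyl ξ p) ≤ ∑' p : VC, wt μ ↑p := by
      refine le_trans (measure_biUnion_le P (Set.to_countable VC) _) ?_
      exact le_of_eq (tsum_congr fun p => P_Cyl P μ ξ hiid ↑p)
    have hge1 : ∑' p : VC, wt μ ↑p ≤ P (⋃ p ∈ VC, Cyl ξ p) := hV_le VC hVCvalid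
    have hPE : P E = P (E ∩ Hit) := by
      apply le_antisymm
      · calc P E ≤ P ((E ∩ Hit) ∪ (E \ Hit)) := by
              apply measure_mono
              intro ω hω
              by_cases h : ω ∈ Hit
              · exact Or.inl ⟨hω, h⟩
              · exact Or.inr ⟨hω, h⟩
          _ ≤ P (E ∩ Hit) + P (E \ Hit) := measure_union_le _ _
          _ ≤ P (E ∩ Hit) + P Hitᶜ := add_le_add_right (measure_mono fun ω hω => hω.2) _
          _ = P (E ∩ Hit) := by rw [hHitc, add_zero]
      · exact measure_mono Set.inter_subset_left
    rw [hPE, hEHit, le_antisymm hle1 hge1, hG, tsum_subtype]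
  rw [htreeside, hwalkside]
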